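/- Let q : [0,1] → ℝ be continuous and λ ∈ ℝ. Let c and s be the real-valued solutions with c(0)=1, c'(0)=0 and s(0)=0, s'(0)=1, and assume s(1) ≠ 0. Then for any complex-valued solutions u and v and every x ∈ [0,1], conj(u(x))·v'(x) − conj(u'(x))·v(x) = ( conj(u(0))·v(1) − conj(u(1))·v(0) ) / s(1). -/

import Mathlib

open Set

private lemma ofReal_hasDWA {f : ℝ → ℝ} {u x : ℝ} {s : Set ℝ} (h : HasDerivWithinAt f u s x) :
    HasDerivWithinAt (fun y => ((f y : ℂ))) (u : ℂ) s x := by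
  simpa [Function.comp_def] using (Complex.ofRealCLM.hasFDerivAt.comp_hasDerivWithinAt x h)

private lemma wronskian_const (q : ℝ → ℝ) (lam : ℝ) (f g : ℝ → ℂ)
    (hf : ContDiffOn ℝ 2 f (Icc 0 1)) (hg : ContDiffOn ℝ 2 g (Icc 0 1))
    (hfe : ∀ x ∈ Icc (0:ℝ) 1,
      derivWithin (derivWithin f (Icc 0 1)) (Icc 0 1) x = ((q x : ℂ) - lam) * f x)
    (hge : ∀ x ∈ Icc (0:ℝ) 1,
      derivWithin (derivWithin g (Icc 0 1)) (Icc 0 1) x = ((q x : ℂ) - lam) * g x) :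
    ∀ x ∈ Icc (0:ℝ) 1,
      f x * derivWithin g (Icc 0 1) x - derivWithin f (Icc 0 1) x * g x
      = f 0 * derivWithin g (Icc 0 1) 0 - derivWithin f (Icc 0 1) 0 * g 0 := by
  have hUD : UniqueDiffOn ℝ (Icc (0:ℝ) 1) := uniqueDiffOn_Icc (by norm_num)
  have hdf : DifferentiableOn ℝ f (Icc 0 1) := hf.differentiableOn (by norm_num)
  have hdg : DifferentiableOn ℝ g (Icc 0 1) := hg.differentiableOn (by norm_num)
  have hdf' : DifferentiableOn ℝ (derivWithin f (Icc 0 1)) (Icc 0 1) :=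
    (hf.derivWithin (m := 1) hUD (by norm_num)).differentiableOn (by norm_num)
  have hdg' : DifferentiableOn ℝ (derivWithin g (Icc 0 1)) (Icc 0 1) :=
    (hg.derivWithin (m := 1) hUD (by norm_num)).differentiableOn (by norm_num)
  set W : ℝ → ℂ := fun x =>
    f x * derivWithin g (Icc 0 1) x - derivWithin f (Icc 0 1) x * g x with hW
  have hWd : ∀ x ∈ Icc (0:ℝ) 1, HasDerivWithinAt W 0 (Icc 0 1) x := by
    intro x hx
    have h1 := (hdf x hx).hasDerivWithinAt
    have h2 := (hdg x hx).hasDerivWithinAt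
    have h3 := (hdf' x hx).hasDerivWithinAt
    have h4 := (hdg' x hx).hasDerivWithinAt
    rw [hfe x hx] at h3
    rw [hge x hx] at h4
    have := ((h1.mul h4).sub (h3.mul h2))
    convert this using 1
    · rfl
    · rfl
    · ring
  have hWdiff : DifferentiableOn ℝ W (Icc 0 1) :=
    fun x hx => (hWd x hx).differentiableWithinAt
  have hWderiv : ∀ x ∈ Ico (0:ℝ) 1, derivWithin W (Icc 0 1) x = 0 := by
    intro x hx
    exact (hWd x (Ico_subset_Icc_self hx)).derivWithin (hUD x (Ico_subset_Icc_self hx))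
  exact constant_of_derivWithin_zero hWdiff hWderiv

/-- complexification of a real solution -/
private lemma real_pack (q : ℝ → ℝ) (lam : ℝ) (c : ℝ → ℝ)
    (hc : ContDiffOn ℝ 2 c (Icc 0 1))
    (hceq : ∀ x ∈ Icc (0:ℝ) 1,
      derivWithin (derivWithin c (Icc 0 1)) (Icc 0 1) x = (q x - lam) * c x) :
    ContDiffOn ℝ 2 (fun y => ((c y : ℂ))) (Icc 0 1) ∧
    (∀ x ∈ Icc (0:ℝ) 1,
      derivWithin (fun y => ((c y : ℂ))) (Icc 0 1) x = Complex.ofReal (derivWithin c (Icc 0 1) x)) ∧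
    (∀ x ∈ Icc (0:ℝ) 1,
      derivWithin (derivWithin (fun y => ((c y : ℂ))) (Icc 0 1)) (Icc 0 1) x
        = ((q x : ℂ) - lam) * (c x : ℂ)) := by
  have hUD : UniqueDiffOn ℝ (Icc (0:ℝ) 1) := uniqueDiffOn_Icc (by norm_num)
  have hdc : DifferentiableOn ℝ c (Icc 0 1) := hc.differentiableOn (by norm_num)
  have hdc' : DifferentiableOn ℝ (derivWithin c (Icc 0 1)) (Icc 0 1) :=
    (hc.derivWithin (m := 1) hUD (by norm_num)).differentiableOn (by norm_num)
  have hsmooth : ContDiffOn ℝ 2 (fun y => ((c y : ℂ))) (Icc 0 1) :=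
    Complex.ofRealCLM.contDiff.comp_contDiffOn hc
  have hd1 : ∀ x ∈ Icc (0:ℝ) 1,
      derivWithin (fun y => ((c y : ℂ))) (Icc 0 1) x = Complex.ofReal (derivWithin c (Icc 0 1) x) :=
    fun x hx => (ofReal_hasDWA (hdc x hx).hasDerivWithinAt).derivWithin (hUD x hx)
  refine ⟨hsmooth, hd1, fun x hx => ?_⟩
  rw [derivWithin_congr hd1 (hd1 x hx),
    (ofReal_hasDWA (hdc' x hx).hasDerivWithinAt).derivWithin (hUD x hx), hceq x hx]
  push_cast
  ring

/-- conjugation of a complex solution -/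
private lemma conj_pack (q : ℝ → ℝ) (lam : ℝ) (u : ℝ → ℂ)
    (hu : ContDiffOn ℝ 2 u (Icc 0 1))
    (hueq : ∀ x ∈ Icc (0:ℝ) 1,
      derivWithin (derivWithin u (Icc 0 1)) (Icc 0 1) x = ((q x : ℂ) - lam) * u x) :
    ContDiffOn ℝ 2 (fun y => (starRingEnd ℂ) (u y)) (Icc 0 1) ∧
    (∀ x ∈ Icc (0:ℝ) 1,
      derivWithin (fun y => (starRingEnd ℂ) (u y)) (Icc 0 1) x
        = (starRingEnd ℂ) (derivWithin u (Icc 0 1) x)) ∧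
    (∀ x ∈ Icc (0:ℝ) 1,
      derivWithin (derivWithin (fun y => (starRingEnd ℂ) (u y)) (Icc 0 1)) (Icc 0 1) x
        = ((q x : ℂ) - lam) * (starRingEnd ℂ) (u x)) := by
  have hUD : UniqueDiffOn ℝ (Icc (0:ℝ) 1) := uniqueDiffOn_Icc (by norm_num)
  have hdu : DifferentiableOn ℝ u (Icc 0 1) := hu.differentiableOn (by norm_num)
  have hdu' : DifferentiableOn ℝ (derivWithin u (Icc 0 1)) (Icc 0 1) :=
    (hu.derivWithin (m := 1) hUD (by norm_num)).differentiableOn (by norm_num)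
  have hsmooth : ContDiffOn ℝ 2 (fun y => (starRingEnd ℂ) (u y)) (Icc 0 1) :=
    Complex.conjCLE.toContinuousLinearMap.contDiff.comp_contDiffOn hu
  have hd1 : ∀ x ∈ Icc (0:ℝ) 1,
      derivWithin (fun y => (starRingEnd ℂ) (u y)) (Icc 0 1) x
        = (starRingEnd ℂ) (derivWithin u (Icc 0 1) x) :=
    fun x hx => ((hdu x hx).hasDerivWithinAt.star).derivWithin (hUD x hx)
  refine ⟨hsmooth, hd1, fun x hx => ?_⟩
  have h2 := ((hdu' x hx).hasDerivWithinAt.star).derivWithin (hUD x hx)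
  simp only [Complex.star_def] at h2
  rw [derivWithin_congr hd1 (hd1 x hx), h2, hueq x hx, map_mul, map_sub]
  simp


/-- with `c`, `s` the standard real solutions of `w'' = (q − λ)w` on
`[0,1]` (`c(0)=1, c'(0)=0`, `s(0)=0, s'(0)=1`) and `s(1) ≠ 0`, for any complex
solutions `u`, `v` the Wronskian-type quantity equals
`(conj(u(0))·v(1) − conj(u(1))·v(0)) / s(1)` at every point of `[0,1]`. -/
theorem stmt_18 (q : ℝ → ℝ) (hq : ContinuousOn q (Set.Icc 0 1)) (lam : ℝ)
    (c s : ℝ → ℝ)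
    (hc : ContDiffOn ℝ 2 c (Set.Icc 0 1))
    (hs : ContDiffOn ℝ 2 s (Set.Icc 0 1))
    (hceq : ∀ x ∈ Set.Icc (0 : ℝ) 1,
      derivWithin (derivWithin c (Set.Icc 0 1)) (Set.Icc 0 1) x = (q x - lam) * c x)
    (hseq : ∀ x ∈ Set.Icc (0 : ℝ) 1,
      derivWithin (derivWithin s (Set.Icc 0 1)) (Set.Icc 0 1) x = (q x - lam) * s x)
    (hc0 : c 0 = 1) (hc0' : derivWithin c (Set.Icc 0 1) 0 = 0)
    (hs0 : s 0 = 0) (hs0' : derivWithin s (Set.Icc 0 1) 0 = 1)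
    (hs1 : s 1 ≠ 0)
    (u v : ℝ → ℂ)
    (hu : ContDiffOn ℝ 2 u (Set.Icc 0 1))
    (hv : ContDiffOn ℝ 2 v (Set.Icc 0 1))
    (hueq : ∀ x ∈ Set.Icc (0 : ℝ) 1,
      derivWithin (derivWithin u (Set.Icc 0 1)) (Set.Icc 0 1) x
        = ((q x : ℂ) - (lam : ℂ)) * u x)
    (hveq : ∀ x ∈ Set.Icc (0 : ℝ) 1,
      derivWithin (derivWithin v (Set.Icc 0 1)) (Set.Icc 0 1) x
        = ((q x : ℂ) - (lam : ℂ)) * v x) :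
    ∀ x ∈ Set.Icc (0 : ℝ) 1,
      (starRingEnd ℂ) (u x) * derivWithin v (Set.Icc 0 1) x
          - (starRingEnd ℂ) (derivWithin u (Set.Icc 0 1) x) * v x
        = ((starRingEnd ℂ) (u 0) * v 1 - (starRingEnd ℂ) (u 1) * v 0) / (s 1 : ℂ) := by
  intro x hx
  have h0 : (0:ℝ) ∈ Icc (0:ℝ) 1 := by norm_num
  have h1 : (1:ℝ) ∈ Icc (0:ℝ) 1 := by norm_num
  obtain ⟨hcs, hcd, hce⟩ := real_pack q lam c hc hceq
  obtain ⟨hss, hsd, hse⟩ := real_pack q lam s hs hseq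
  obtain ⟨hus, hud, huee⟩ := conj_pack q lam u hu hueq
  -- Wronskian constants
  have W1 := wronskian_const q lam (fun y => (starRingEnd ℂ) (u y)) v hus hv huee hveq
  have W2 := wronskian_const q lam (fun y => ((c y : ℂ))) v hcs hv hce hveq
  have W3 := wronskian_const q lam (fun y => ((s y : ℂ))) v hss hv hse hveq
  have W4 := wronskian_const q lam (fun y => ((c y : ℂ)))
    (fun y => (starRingEnd ℂ) (u y)) hcs hus hce huee
  have W5 := wronskian_const q lam (fun y => ((s y : ℂ)))
    (fun y => (starRingEnd ℂ) (u y)) hss hus hse huee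
  have W6 := wronskian_const q lam (fun y => ((c y : ℂ))) (fun y => ((s y : ℂ)))
    hcs hss hce hse
  -- notation
  set v0' := derivWithin v (Icc 0 1) 0
  set v1' := derivWithin v (Icc 0 1) 1
  set ub0' := (starRingEnd ℂ) (derivWithin u (Icc 0 1) 0)
  set ub1' := (starRingEnd ℂ) (derivWithin u (Icc 0 1) 1)
  have E2 : (c 1 : ℂ) * v1' - Complex.ofReal (derivWithin c (Set.Icc 0 1) 1) * v 1 = v0' := by
    have := W2 1 h1
    rw [hcd 1 h1, hcd 0 h0] at this
    simpa [hc0, hc0'] using this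
  have E3 : (s 1 : ℂ) * v1' - Complex.ofReal (derivWithin s (Set.Icc 0 1) 1) * v 1 = - v 0 := by
    have := W3 1 h1
    rw [hsd 1 h1, hsd 0 h0] at this
    simpa [hs0, hs0'] using this
  have E4 : (c 1 : ℂ) * ub1' - Complex.ofReal (derivWithin c (Set.Icc 0 1) 1) * (starRingEnd ℂ) (u 1)
      = ub0' := by
    have := W4 1 h1
    rw [hcd 1 h1, hcd 0 h0, hud 1 h1, hud 0 h0] at this
    simpa [hc0, hc0'] using this
  have E5 : (s 1 : ℂ) * ub1' - Complex.ofReal (derivWithin s (Set.Icc 0 1) 1) * (starRingEnd ℂ) (u 1)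
      = - (starRingEnd ℂ) (u 0) := by
    have := W5 1 h1
    rw [hsd 1 h1, hsd 0 h0, hud 1 h1, hud 0 h0] at this
    simpa [hs0, hs0'] using this
  have E6 : (c 1 : ℂ) * Complex.ofReal (derivWithin s (Set.Icc 0 1) 1)
      - Complex.ofReal (derivWithin c (Set.Icc 0 1) 1) * (s 1 : ℂ) = 1 := by
    have := W6 1 h1
    rw [hsd 1 h1, hsd 0 h0, hcd 1 h1, hcd 0 h0] at this
    simpa [hc0, hc0', hs0, hs0'] using this
  have hv1 : v 1 = (c 1 : ℂ) * v 0 + (s 1 : ℂ) * v0' := by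
    linear_combination (s 1 : ℂ) * E2 - (c 1 : ℂ) * E3 - (v 1) * E6
  have hu1 : (starRingEnd ℂ) (u 1)
      = (c 1 : ℂ) * (starRingEnd ℂ) (u 0) + (s 1 : ℂ) * ub0' := by
    linear_combination (s 1 : ℂ) * E4 - (c 1 : ℂ) * E5 - ((starRingEnd ℂ) (u 1)) * E6
  have key := W1 x hx
  rw [hud x hx, hud 0 h0] at key
  rw [key]
  have hs1' : (s 1 : ℂ) ≠ 0 := by exact_mod_cast hs1
  field_simp
  linear_combination v 0 * hu1 - (starRingEnd ℂ) (u 0) * hv1
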